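/- Let Y be a closed subspace of a real Banach space X. If Y has property-(U) in X, then for every nonzero closed subspace Z of Y, the quotient Y/Z has property-(U) in X/Z. -/

import Mathlib

open NormedSpace Metric Set

namespace Paper

variable {X : Type*} [NormedAddCommGroup X] [NormedSpace ℝ X]

/-- The restriction of a continuous linear functional to a subspace. -/
noncomputable def restr (Y : Submodule ℝ X) (f : StrongDual ℝ X) : StrongDual ℝ ↥Y :=
  f.comp Y.subtypeL

/-- The annihilator `Y⊥` of a subspace `Y` in the dual. -/
def ann (Y : Submodule ℝ X) : Set (StrongDual ℝ X) := {f | ∀ y ∈ Y, f y = 0}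

/-- The set of norm-preserving (Hahn–Banach) extensions of `g : Y* ` to `X`. -/
def HB (Y : Submodule ℝ X) (g : StrongDual ℝ ↥Y) : Set (StrongDual ℝ X) :=
  {f | (∀ y : Y, f (y : X) = g y) ∧ ‖f‖ = ‖g‖}

/-- Best approximations to `x` from a set `A`. -/
def bestApprox {E : Type*} [NormedAddCommGroup E] (A : Set E) (x : E) : Set E :=
  {z ∈ A | ‖x - z‖ = infDist x A}

/-- Property-(U): every functional on `Y` has a unique norm-preserving extension to `X`. -/
def propU (Y : Submodule ℝ X) : Prop :=
  ∀ g : StrongDual ℝ ↥Y, ∃! f : StrongDual ℝ X, f ∈ HB Y g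

/-- `Y# `: the set of functionals whose norm equals the norm of their restriction to `Y`. -/
def sharp (Y : Submodule ℝ X) : Set (StrongDual ℝ X) := {f | ‖f‖ = ‖restr Y f‖}

/-- Property-(HB), stated via the decomposition `X* = Y# ⊕ Y⊥`. -/
def propHB (Y : Submodule ℝ X) : Prop :=
  (∀ f ∈ sharp Y, ∀ g ∈ sharp Y, f + g ∈ sharp Y) ∧
  (∀ (c : ℝ), ∀ f ∈ sharp Y, c • f ∈ sharp Y) ∧
  (∀ f : StrongDual ℝ X, ∃ g ∈ sharp Y, ∃ h ∈ ann Y, f = g + h) ∧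
  (∀ g ∈ sharp Y, ∀ h ∈ ann Y, h ≠ 0 → ‖g‖ < ‖g + h‖ ∧ ‖h‖ ≤ ‖g + h‖)

end Paper

open Paper

set_option synthInstance.maxHeartbeats 1000000
set_option maxHeartbeats 1000000

section AuxQuot

variable {X : Type*} [NormedAddCommGroup X] [NormedSpace ℝ X] (Z : Submodule ℝ X)

/-- The continuous linear quotient map `X → X ⧸ Z`. -/
noncomputable def cmk : X →L[ℝ] X ⧸ Z :=
  Z.mkQ.mkContinuous 1 fun x => by
    simpa using Submodule.Quotient.norm_mk_le (S := Z) x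

@[simp] lemma cmk_apply (x : X) : cmk Z x = Submodule.Quotient.mk x := rfl

/-- Composition with the quotient map preserves the norm of a functional. -/
lemma norm_comp_cmk (F : StrongDual ℝ (X ⧸ Z)) : ‖F.comp (cmk Z)‖ = ‖F‖ := by
  refine le_antisymm (ContinuousLinearMap.opNorm_le_bound _ (norm_nonneg F) fun x => ?_)
    (ContinuousLinearMap.opNorm_le_bound _ (norm_nonneg _) fun w => ?_)
  · calc ‖(F.comp (cmk Z)) x‖ ≤ ‖F‖ * ‖cmk Z x‖ := F.le_opNorm _
      _ ≤ ‖F‖ * ‖x‖ := by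
        have := Submodule.Quotient.norm_mk_le (S := Z) x
        exact mul_le_mul_of_nonneg_left this (norm_nonneg F)
  · set C := ‖F.comp (cmk Z)‖ with hC
    have hC0 : 0 ≤ C := norm_nonneg _
    refine le_of_forall_pos_le_add fun ε hε => ?_
    have hε' : 0 < ε / (C + 1) := by positivity
    obtain ⟨m, hm, hmlt⟩ := Submodule.Quotient.norm_mk_lt w hε'
    have h1 : ‖F w‖ = ‖(F.comp (cmk Z)) m‖ := by
      simp [hm]
    have h2 : ‖(F.comp (cmk Z)) m‖ ≤ C * ‖m‖ := ContinuousLinearMap.le_opNorm _ _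
    have h3 : C * ‖m‖ ≤ C * (‖w‖ + ε / (C + 1)) :=
      mul_le_mul_of_nonneg_left hmlt.le hC0
    have h4 : C * (ε / (C + 1)) ≤ ε := by
      rw [mul_div_assoc']
      rw [div_le_iff₀ (by linarith)]
      nlinarith
    calc ‖F w‖ ≤ C * (‖w‖ + ε / (C + 1)) := by rw [h1]; exact h2.trans h3
      _ = C * ‖w‖ + C * (ε / (C + 1)) := by ring
      _ ≤ C * ‖w‖ + ε := by linarith

/-- Lift of a functional vanishing on `Z` to the quotient `X ⧸ Z`. -/
noncomputable def cliftQ (F : StrongDual ℝ X) (hF : ∀ z ∈ Z, F z = 0) : StrongDual ℝ (X ⧸ Z) :=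
  (Z.liftQ (F : X →ₗ[ℝ] ℝ) (fun z hz => LinearMap.mem_ker.2 (hF z hz))).mkContinuous ‖F‖
    (by
      intro w
      set L := Z.liftQ (F : X →ₗ[ℝ] ℝ) (fun z hz => LinearMap.mem_ker.2 (hF z hz))
      have key : ∀ ε : ℝ, 0 < ε → ‖L w‖ ≤ ‖F‖ * ‖w‖ + ε := by
        intro ε hε
        have hF0 : (0:ℝ) ≤ ‖F‖ := norm_nonneg F
        have hε' : 0 < ε / (‖F‖ + 1) := by positivity
        obtain ⟨m, hm, hmlt⟩ := Submodule.Quotient.norm_mk_lt w hε'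
        have h1 : L w = F m := by rw [← hm]; simp [L]
        have h2 : ‖F m‖ ≤ ‖F‖ * ‖m‖ := F.le_opNorm m
        have h3 : ‖F‖ * ‖m‖ ≤ ‖F‖ * (‖w‖ + ε / (‖F‖ + 1)) :=
          mul_le_mul_of_nonneg_left hmlt.le hF0
        have h4 : ‖F‖ * (ε / (‖F‖ + 1)) ≤ ε := by
          rw [mul_div_assoc', div_le_iff₀ (by linarith)]
          nlinarith
        calc ‖L w‖ = ‖F m‖ := by rw [h1]
          _ ≤ ‖F‖ * (‖w‖ + ε / (‖F‖ + 1)) := h2.trans h3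
          _ = ‖F‖ * ‖w‖ + ‖F‖ * (ε / (‖F‖ + 1)) := by ring
          _ ≤ ‖F‖ * ‖w‖ + ε := by linarith
      exact le_of_forall_pos_le_add key)

@[simp] lemma cliftQ_mk (F : StrongDual ℝ X) (hF : ∀ z ∈ Z, F z = 0) (x : X) :
    cliftQ Z F hF (Submodule.Quotient.mk x) = F x := by
  simp [cliftQ]

lemma comp_cliftQ (F : StrongDual ℝ X) (hF : ∀ z ∈ Z, F z = 0) :
    (cliftQ Z F hF).comp (cmk Z) = F := by
  ext x; simp

lemma norm_cliftQ (F : StrongDual ℝ X) (hF : ∀ z ∈ Z, F z = 0) :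
    ‖cliftQ Z F hF‖ = ‖F‖ := by
  conv_rhs => rw [← comp_cliftQ Z F hF]
  rw [norm_comp_cmk]

variable (Y : Submodule ℝ X)

/-- The continuous linear map `Y → Y.map Z.mkQ` induced by the quotient map. -/
noncomputable def jmap : ↥Y →L[ℝ] ↥(Y.map Z.mkQ) :=
  ((Z.mkQ.comp Y.subtype).codRestrict (Y.map Z.mkQ)
      (fun y => ⟨(y : X), y.2, rfl⟩)).mkContinuous 1
    (fun y => by
      have : ‖(Z.mkQ.comp Y.subtype).codRestrict (Y.map Z.mkQ)
          (fun y => ⟨(y : X), y.2, rfl⟩) y‖ = ‖(Submodule.Quotient.mk (y : X) : X ⧸ Z)‖ := rfl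
      rw [this, one_mul]
      exact Submodule.Quotient.norm_mk_le (S := Z) _)

@[simp] lemma jmap_coe (y : ↥Y) :
    ((jmap Z Y y : ↥(Y.map Z.mkQ)) : X ⧸ Z) = Submodule.Quotient.mk (y : X) := rfl

lemma norm_comp_jmap (hZY : Z ≤ Y) (g : StrongDual ℝ ↥(Y.map Z.mkQ)) :
    ‖g.comp (jmap Z Y)‖ = ‖g‖ := by
  refine le_antisymm (ContinuousLinearMap.opNorm_le_bound _ (ContinuousLinearMap.opNorm_nonneg g) fun y => ?_)
    (ContinuousLinearMap.opNorm_le_bound _ (ContinuousLinearMap.opNorm_nonneg _) fun w => ?_)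
  · calc ‖(g.comp (jmap Z Y)) y‖ ≤ ‖g‖ * ‖jmap Z Y y‖ := g.le_opNorm _
      _ ≤ ‖g‖ * ‖y‖ := by
        refine mul_le_mul_of_nonneg_left ?_ (ContinuousLinearMap.opNorm_nonneg g)
        have : ‖jmap Z Y y‖ = ‖(Submodule.Quotient.mk (y : X) : X ⧸ Z)‖ := rfl
        rw [this]
        exact Submodule.Quotient.norm_mk_le (S := Z) _
  · set C := ‖g.comp (jmap Z Y)‖ with hC
    have hC0 : 0 ≤ C := ContinuousLinearMap.opNorm_nonneg _
    refine le_of_forall_pos_le_add fun ε hε => ?_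
    have hε' : 0 < ε / (C + 1) := by positivity
    -- the norm of `w` in the submodule equals its norm in the quotient
    have hwn : ‖w‖ = ‖(w : X ⧸ Z)‖ := rfl
    obtain ⟨m, hm, hmlt⟩ := Submodule.Quotient.norm_mk_lt (w : X ⧸ Z) hε'
    -- find a representative of `w` inside `Y`
    obtain ⟨y0, hy0Y, hy0⟩ := w.2
    have hmem : m ∈ Y := by
      have hz : m - y0 ∈ Z := by
        rw [← Submodule.Quotient.mk_eq_zero (p := Z)] at *
        · rw [Submodule.Quotient.mk_sub]
          have : (Submodule.Quotient.mk y0 : X ⧸ Z) = (w : X ⧸ Z) := hy0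
          rw [hm, this, sub_self]
      have : m = (m - y0) + y0 := by abel
      rw [this]
      exact Y.add_mem (hZY hz) hy0Y
    have hjw : jmap Z Y ⟨m, hmem⟩ = w := by
      apply Subtype.ext
      simpa using hm
    have h1 : ‖g w‖ = ‖(g.comp (jmap Z Y)) ⟨m, hmem⟩‖ := by
      simp [hjw]
    have h2 : ‖(g.comp (jmap Z Y)) ⟨m, hmem⟩‖ ≤ C * ‖(⟨m, hmem⟩ : ↥Y)‖ :=
      ContinuousLinearMap.le_opNorm _ _
    have hnm : ‖(⟨m, hmem⟩ : ↥Y)‖ = ‖m‖ := rfl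
    have h3 : C * ‖m‖ ≤ C * (‖w‖ + ε / (C + 1)) := by
      rw [hwn]; exact mul_le_mul_of_nonneg_left hmlt.le hC0
    have h4 : C * (ε / (C + 1)) ≤ ε := by
      rw [mul_div_assoc', div_le_iff₀ (by linarith)]
      nlinarith
    calc ‖g w‖ ≤ C * (‖w‖ + ε / (C + 1)) := by
          rw [h1]; rw [hnm] at h2; exact h2.trans h3
      _ = C * ‖w‖ + C * (ε / (C + 1)) := by ring
      _ ≤ C * ‖w‖ + ε := by linarith

end AuxQuot

/-- if `Y` has property-(U) in `X`, then for every nonzero closed subspace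
`Z ⊆ Y` the quotient `Y/Z` has property-(U) in `X/Z`. -/
theorem stmt3 {X : Type*} [NormedAddCommGroup X] [NormedSpace ℝ X] [CompleteSpace X]
    (Y : Submodule ℝ X) (hYc : IsClosed (Y : Set X)) (hU : propU Y) :
    ∀ Z : Submodule ℝ X, Z ≤ Y → Z ≠ ⊥ →
      ∀ [IsClosed (Z : Set X)], propU (X := X ⧸ Z) (Y.map Z.mkQ) := by
  intro Z hZY _ _
  intro g
  -- pull `g` back to a functional on `Y`
  set g' : StrongDual ℝ ↥Y := g.comp (jmap Z Y) with hg'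
  have hg'norm : ‖g'‖ = ‖g‖ := norm_comp_jmap Z Y hZY g
  obtain ⟨f, ⟨hfext, hfnorm⟩, hfuniq⟩ := hU g'
  -- `f` vanishes on `Z`
  have hfZ : ∀ z ∈ Z, f z = 0 := by
    intro z hz
    have h1 : f z = g' ⟨z, hZY hz⟩ := hfext ⟨z, hZY hz⟩
    have h2 : jmap Z Y (⟨z, hZY hz⟩ : ↥Y) = 0 := by
      apply Subtype.ext
      show (Submodule.Quotient.mk z : X ⧸ Z) = 0
      exact (Submodule.Quotient.mk_eq_zero Z).2 hz
    rw [h1, hg']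
    simp [ContinuousLinearMap.comp_apply, h2]
  -- the lift of `f` to the quotient is the desired extension
  refine ⟨cliftQ Z f hfZ, ⟨?_, ?_⟩, ?_⟩
  · -- it extends `g`
    intro w
    obtain ⟨y, hyY, hy⟩ := w.2
    have hjw : jmap Z Y ⟨y, hyY⟩ = w := by
      apply Subtype.ext
      simpa using hy
    have : ((w : ↥(Y.map Z.mkQ)) : X ⧸ Z) = Submodule.Quotient.mk y := hy.symm
    rw [this, cliftQ_mk]
    have := hfext ⟨y, hyY⟩
    rw [this, hg']
    simp [ContinuousLinearMap.comp_apply, hjw]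
  · -- norms agree
    rw [norm_cliftQ, hfnorm, hg'norm]
  · -- uniqueness
    intro F ⟨hFext, hFnorm⟩
    -- pull `F` back to `X`
    have hF'ext : ∀ y : ↥Y, (F.comp (cmk Z)) (y : X) = g' y := by
      intro y
      have h1 : (cmk Z) (y : X) = ((jmap Z Y y : ↥(Y.map Z.mkQ)) : X ⧸ Z) := rfl
      have h2 := hFext (jmap Z Y y)
      rw [ContinuousLinearMap.comp_apply, h1, h2, hg']
      rfl
    have hF'norm : ‖F.comp (cmk Z)‖ = ‖g'‖ := by
      rw [norm_comp_cmk, hFnorm, hg'norm]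
    have hFf : F.comp (cmk Z) = f := hfuniq _ ⟨hF'ext, hF'norm⟩
    -- conclude `F = cliftQ Z f hfZ`
    ext1 w
    obtain ⟨x, rfl⟩ := Submodule.Quotient.mk_surjective Z w
    have h1 : F (Submodule.Quotient.mk x) = (F.comp (cmk Z)) x := rfl
    rw [h1, hFf, cliftQ_mk]
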